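/- Let T be a bounded operator on ℓ²(V) whose matrix elements vanish unless |w| = |v| ± 1 and satisfy sup_v Σ_w |⟨δ_v, Tδ_w⟩| ≤ C(|v|+1), and let q: V → ℝ satisfy sup_{w: |w|=|v|±1} |q(v) − q(w)| = o(|v|^{−1}) as |v| → ∞. Then the commutator [q, T] (q acting by multiplication) is a compact operator on ℓ²(V). -/

import Mathlib

open scoped InnerProductSpace

open scoped ENNReal

namespace Statement19

variable {V : Type*}

local notation "H" => lp (fun _ : V => ℂ) 2

lemma memℓp_two_of_le {f : V → ℂ} (g : lp (fun _ : V => ℂ) 2)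
    (h : ∀ v, ‖f v‖ ≤ ‖g v‖) : Memℓp f 2 := by
  apply memℓp_gen
  have hg : Summable fun v => ‖g v‖ ^ (2 : ℝ≥0∞).toReal :=
    (lp.memℓp g).summable (by norm_num)
  exact hg.of_nonneg_of_le (fun v => Real.rpow_nonneg (norm_nonneg _) _)
    (fun v => Real.rpow_le_rpow (norm_nonneg _) (h v) (by norm_num))

noncomputable def cutF (P : V → Prop) [DecidablePred P] (g : lp (fun _ : V => ℂ) 2) :
    lp (fun _ : V => ℂ) 2 :=
  ⟨fun v => if P v then g v else 0,
    memℓp_two_of_le g (by intro v; split <;> simp)⟩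

@[simp] lemma cutF_apply (P : V → Prop) [DecidablePred P] (g : lp (fun _ : V => ℂ) 2) (v : V) :
    cutF P g v = if P v then g v else 0 := rfl

lemma cutF_sub (P : V → Prop) [DecidablePred P] (g h : lp (fun _ : V => ℂ) 2) :
    cutF P (g - h) = cutF P g - cutF P h := by
  apply lp.ext
  funext v
  simp only [lp.coeFn_sub, Pi.sub_apply, cutF_apply]
  split <;> simp

lemma cutF_add (P : V → Prop) [DecidablePred P] (g h : lp (fun _ : V => ℂ) 2) :
    cutF P (g + h) = cutF P g + cutF P h := by
  apply lp.ext
  funext v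
  simp only [lp.coeFn_add, Pi.add_apply, cutF_apply]
  split <;> simp

lemma cutF_smul (P : V → Prop) [DecidablePred P] (c : ℂ) (g : lp (fun _ : V => ℂ) 2) :
    cutF P (c • g) = c • cutF P g := by
  apply lp.ext
  funext v
  simp only [lp.coeFn_smul, Pi.smul_apply, cutF_apply]
  split <;> simp

lemma cutF_zero (P : V → Prop) [DecidablePred P] : cutF P (0 : lp (fun _ : V => ℂ) 2) = 0 := by
  apply lp.ext
  funext v
  simp

/-- weighted pointwise norm bound -/
lemma norm_le_mul_of_pointwise {f g : lp (fun _ : V => ℂ) 2} {M : ℝ} (hM : 0 ≤ M)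
    (h : ∀ v, ‖f v‖ ≤ M * ‖g v‖) : ‖f‖ ≤ M * ‖g‖ := by
  have hp : 0 < (2 : ℝ≥0∞).toReal := by norm_num
  refine lp.norm_le_of_tsum_le hp (by positivity) ?_
  have hsum : Summable fun v => ‖g v‖ ^ (2 : ℝ≥0∞).toReal := (lp.memℓp g).summable hp
  have h1 : ∀ v, ‖f v‖ ^ (2 : ℝ≥0∞).toReal ≤ M ^ (2 : ℝ≥0∞).toReal * ‖g v‖ ^ (2 : ℝ≥0∞).toReal := by
    intro v
    rw [← Real.mul_rpow hM (norm_nonneg _)]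
    exact Real.rpow_le_rpow (norm_nonneg _) (h v) (by norm_num)
  calc ∑' v, ‖f v‖ ^ (2 : ℝ≥0∞).toReal
      ≤ ∑' v, M ^ (2 : ℝ≥0∞).toReal * ‖g v‖ ^ (2 : ℝ≥0∞).toReal := by
        refine Summable.tsum_le_tsum h1 ((lp.memℓp f).summable hp) (hsum.mul_left _)
    _ = M ^ (2 : ℝ≥0∞).toReal * ∑' v, ‖g v‖ ^ (2 : ℝ≥0∞).toReal := tsum_mul_left
    _ = (M * ‖g‖) ^ (2 : ℝ≥0∞).toReal := by
        rw [← lp.norm_rpow_eq_tsum hp g, ← Real.mul_rpow hM (norm_nonneg _)]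

lemma norm_le_of_pointwise {f g : lp (fun _ : V => ℂ) 2} (h : ∀ v, ‖f v‖ ≤ ‖g v‖) :
    ‖f‖ ≤ ‖g‖ := by
  simpa using norm_le_mul_of_pointwise (zero_le_one) (by simpa using h)

lemma norm_cutF_le (P : V → Prop) [DecidablePred P] (g : lp (fun _ : V => ℂ) 2) :
    ‖cutF P g‖ ≤ ‖g‖ :=
  norm_le_of_pointwise (by intro v; rw [cutF_apply]; split <;> simp)


lemma apply_eq_tsum [DecidableEq V] (T : lp (fun _ : V => ℂ) 2 →L[ℂ] lp (fun _ : V => ℂ) 2)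
    (ψ : lp (fun _ : V => ℂ) 2) (v : V) :
    T ψ v = ∑' w, ψ w * ⟪lp.single 2 v (1 : ℂ), T (lp.single 2 w (1 : ℂ))⟫_ℂ := by
  have h1 : HasSum (fun w => lp.single 2 w (ψ w)) ψ := lp.hasSum_single ENNReal.ofNat_ne_top ψ
  have h3 := (h1.mapL T).mapL (innerSL ℂ (lp.single 2 v (1 : ℂ)))
  have h4 : ∀ w : V, ⟪lp.single 2 v (1 : ℂ), T (lp.single 2 w (ψ w))⟫_ℂ
      = ψ w * ⟪lp.single 2 v (1 : ℂ), T (lp.single 2 w (1 : ℂ))⟫_ℂ := by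
    intro w
    have : (lp.single 2 w (ψ w) : lp (fun _ : V => ℂ) 2)
        = ψ w • (lp.single 2 w (1 : ℂ) : lp (fun _ : V => ℂ) 2) := by
      have h := lp.single_smul (E := fun _ : V => ℂ) 2 w (ψ w) (1 : ℂ)
      rw [smul_eq_mul, mul_one] at h
      exact h
    rw [this]
    simp [inner_smul_right]
  have h5 : ⟪lp.single 2 v (1 : ℂ), T ψ⟫_ℂ = T ψ v := by
    rw [lp.inner_single_left]
    simp
  simp only [innerSL_apply_apply, h4, h5] at h3
  exact h3.tsum_eq.symm

section Main

variable [DecidableEq V] (len : V → ℕ)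
variable (T Mq : lp (fun _ : V => ℂ) 2 →L[ℂ] lp (fun _ : V => ℂ) 2)
variable (q : V → ℝ)

lemma cut_vanish
    (hvanish : ∀ v w : V, len w ≠ len v + 1 → len v ≠ len w + 1 →
      ⟪lp.single 2 v (1 : ℂ), T (lp.single 2 w (1 : ℂ))⟫_ℂ = 0)
    (hMq : ∀ (φ : lp (fun _ : V => ℂ) 2) (v : V), Mq φ v = (q v : ℂ) * φ v)
    (r : ℕ) (ψ : lp (fun _ : V => ℂ) 2)
    (h1 : ∀ w, len w = r + 1 → ψ w = 0) (h2 : ∀ w, r = len w + 1 → ψ w = 0) :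
    cutF (fun v => len v = r) ((Mq ∘L T - T ∘L Mq) ψ) = 0 := by
  apply lp.ext
  funext u
  rw [cutF_apply]
  simp only [lp.coeFn_zero, Pi.zero_apply]
  split
  case isFalse => rfl
  case isTrue hu =>
    have key : ∀ (χ : lp (fun _ : V => ℂ) 2), (∀ w, χ w = 0 ∨
        ⟪lp.single 2 u (1 : ℂ), T (lp.single 2 w (1 : ℂ))⟫_ℂ = 0) → T χ u = 0 := by
      intro χ hχ
      rw [apply_eq_tsum T χ u]
      rw [show (fun w => χ w * ⟪lp.single 2 u (1 : ℂ), T (lp.single 2 w (1 : ℂ))⟫_ℂ)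
          = fun _ => (0 : ℂ) from funext fun w => by rcases hχ w with h | h <;> simp [h]]
      exact tsum_zero
    have e : ((Mq ∘L T - T ∘L Mq) ψ) = Mq (T ψ) - T (Mq ψ) := by
      simp [ContinuousLinearMap.sub_apply]
    have hTψ : T ψ u = 0 := by
      apply key
      intro w
      by_cases hw1 : len w = len u + 1
      · exact Or.inl (h1 w (by rw [hu] at hw1; exact hw1))
      by_cases hw2 : len u = len w + 1
      · exact Or.inl (h2 w (by rw [hu] at hw2; exact hw2))
      · exact Or.inr (hvanish u w hw1 hw2)
    have hTMψ : T (Mq ψ) u = 0 := by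
      apply key
      intro w
      by_cases hw1 : len w = len u + 1
      · refine Or.inl ?_
        rw [hMq, h1 w (by rw [hu] at hw1; exact hw1), mul_zero]
      by_cases hw2 : len u = len w + 1
      · refine Or.inl ?_
        rw [hMq, h2 w (by rw [hu] at hw2; exact hw2), mul_zero]
      · exact Or.inr (hvanish u w hw1 hw2)
    rw [e, lp.coeFn_sub, Pi.sub_apply, hMq, hTψ, hTMψ, mul_zero, sub_zero]


lemma sphere_bound
    (hMq : ∀ (φ : lp (fun _ : V => ℂ) 2) (v : V), Mq φ v = (q v : ℂ) * φ v)
    (ε : ℝ) (hε : 0 < ε) (R : ℕ) (hR : 1 ≤ R)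
    (hqε : ∀ v w : V, R ≤ len v → (len w = len v + 1 ∨ len v = len w + 1) →
      (len v : ℝ) * |q v - q w| < ε)
    (r s : ℕ) (hadj : r = s + 1 ∨ s = r + 1) (hrR : R ≤ r) (hsR : R ≤ s)
    (φ : lp (fun _ : V => ℂ) 2) (hsupp : ∀ v, len v ≠ s → φ v = 0) :
    ‖cutF (fun v => len v = r) ((Mq ∘L T - T ∘L Mq) φ)‖ ≤ 3 * ε * ‖T‖ * ‖φ‖ := by
  have hTn : (0:ℝ) ≤ ‖T‖ := norm_nonneg _
  by_cases hφ : φ = 0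
  · rw [hφ]
    rw [map_zero, cutF_zero, norm_zero]
    positivity
  by_cases hex : ∃ u, len u = r
  case neg =>
    have : cutF (fun v => len v = r) ((Mq ∘L T - T ∘L Mq) φ) = 0 := by
      apply lp.ext
      funext v
      rw [cutF_apply]
      simp only [lp.coeFn_zero, Pi.zero_apply]
      rw [if_neg (fun h => hex ⟨v, h⟩)]
    rw [this, norm_zero]
    positivity
  obtain ⟨u₀, hu₀⟩ := hex
  have hw₀ : ∃ w₀, φ w₀ ≠ 0 := by
    by_contra h
    push_neg at h
    exact hφ (by apply lp.ext; funext v; simpa using h v)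
  obtain ⟨w₀, hw₀⟩ := hw₀
  have hlw₀ : len w₀ = s := by
    by_contra h
    exact hw₀ (hsupp w₀ h)
  -- one le casts
  have hone : ∀ m : ℕ, R ≤ m → (1:ℝ) ≤ (m:ℝ) := fun m hm => by
    exact_mod_cast le_trans hR hm
  have habs : ∀ v w : V, R ≤ len v → (len w = len v + 1 ∨ len v = len w + 1) →
      |q v - q w| ≤ ε := by
    intro v w h1 h2
    have h3 := hqε v w h1 h2
    have h4 : |q v - q w| ≤ (len v : ℝ) * |q v - q w| :=
      le_mul_of_one_le_left (abs_nonneg _) (hone _ h1)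
    linarith
  have adj1 : ∀ v, len v = r → (len w₀ = len v + 1 ∨ len v = len w₀ + 1) := by
    intro v hv
    rw [hv, hlw₀]
    rcases hadj with h | h
    · exact Or.inr h
    · exact Or.inl h
  have hd1 : ∀ v, len v = r → |q v - q w₀| ≤ ε := fun v hv =>
    habs v w₀ (hv ▸ hrR) (adj1 v hv)
  have hd2 : ∀ w, len w = s → |q w - q w₀| ≤ 2 * ε := by
    intro w hw
    have a1 : |q w - q u₀| ≤ ε := by
      apply habs w u₀ (hw ▸ hsR)
      rw [hw, hu₀]
      rcases hadj with h | h
      · exact Or.inl h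
      · exact Or.inr h
    have a2 : |q u₀ - q w₀| ≤ ε := habs u₀ w₀ (hu₀ ▸ hrR) (adj1 u₀ hu₀)
    calc |q w - q w₀| ≤ |q w - q u₀| + |q u₀ - q w₀| := abs_sub_le _ _ _
      _ ≤ 2 * ε := by linarith
  set c : ℂ := ((q w₀ : ℝ) : ℂ) with hc
  set g1 : lp (fun _ : V => ℂ) 2 := Mq (T φ) - c • (T φ) with hg1
  set g2 : lp (fun _ : V => ℂ) 2 := Mq φ - c • φ with hg2
  have key : (Mq ∘L T - T ∘L Mq) φ = g1 - T g2 := by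
    rw [hg1, hg2, map_sub, map_smul]
    simp only [ContinuousLinearMap.sub_apply, ContinuousLinearMap.comp_apply]
    abel
  rw [key, cutF_sub]
  have b1 : ‖cutF (fun v => len v = r) g1‖ ≤ ε * (‖T‖ * ‖φ‖) := by
    have hb : ∀ v, ‖cutF (fun v => len v = r) g1 v‖ ≤ ε * ‖T φ v‖ := by
      intro v
      rw [cutF_apply]
      split
      case isTrue hv =>
        have : g1 v = ((q v - q w₀ : ℝ) : ℂ) * T φ v := by
          rw [hg1, lp.coeFn_sub, Pi.sub_apply, lp.coeFn_smul, Pi.smul_apply, hMq]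
          rw [hc]
          push_cast
          rw [smul_eq_mul]
          ring
        rw [this, norm_mul, Complex.norm_real, Real.norm_eq_abs]
        exact mul_le_mul_of_nonneg_right (hd1 v hv) (norm_nonneg _)
      case isFalse =>
        rw [norm_zero]
        positivity
    calc ‖cutF (fun v => len v = r) g1‖ ≤ ε * ‖T φ‖ := norm_le_mul_of_pointwise hε.le hb
      _ ≤ ε * (‖T‖ * ‖φ‖) := by
          exact mul_le_mul_of_nonneg_left (T.le_opNorm φ) hε.le
  have b2 : ‖cutF (fun v => len v = r) (T g2)‖ ≤ ‖T‖ * (2 * ε * ‖φ‖) := by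
    have hg2b : ‖g2‖ ≤ 2 * ε * ‖φ‖ := by
      apply norm_le_mul_of_pointwise (by positivity)
      intro v
      have : g2 v = ((q v - q w₀ : ℝ) : ℂ) * φ v := by
        rw [hg2, lp.coeFn_sub, Pi.sub_apply, lp.coeFn_smul, Pi.smul_apply, hMq]
        rw [hc]
        push_cast
        rw [smul_eq_mul]
        ring
      rw [this, norm_mul, Complex.norm_real, Real.norm_eq_abs]
      by_cases hv : len v = s
      · exact mul_le_mul_of_nonneg_right (hd2 v hv) (norm_nonneg _)
      · rw [hsupp v hv]
        simp
    calc ‖cutF (fun v => len v = r) (T g2)‖ ≤ ‖T g2‖ :=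
          norm_le_of_pointwise (by
            intro v
            rw [cutF_apply]
            split
            · exact le_refl _
            · rw [norm_zero]; exact norm_nonneg _)
      _ ≤ ‖T‖ * ‖g2‖ := T.le_opNorm g2
      _ ≤ ‖T‖ * (2 * ε * ‖φ‖) := mul_le_mul_of_nonneg_left hg2b hTn
  calc ‖cutF (fun v => len v = r) g1 - cutF (fun v => len v = r) (T g2)‖
      ≤ ‖cutF (fun v => len v = r) g1‖ + ‖cutF (fun v => len v = r) (T g2)‖ := norm_sub_le _ _
    _ ≤ ε * (‖T‖ * ‖φ‖) + ‖T‖ * (2 * ε * ‖φ‖) := add_le_add b1 b2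
    _ = 3 * ε * ‖T‖ * ‖φ‖ := by ring


omit [DecidableEq V] in
lemma sum_sq_cutF_le (t : Finset ℕ) (P : ℕ → V → Prop) [∀ r, DecidablePred (P r)]
    (hdisj : ∀ v, ∀ r ∈ t, ∀ r' ∈ t, P r v → P r' v → r = r')
    (φ : lp (fun _ : V => ℂ) 2) :
    ∑ r ∈ t, ‖cutF (P r) φ‖ ^ (2 : ℝ≥0∞).toReal ≤ ‖φ‖ ^ (2 : ℝ≥0∞).toReal := by
  have hp : 0 < (2 : ℝ≥0∞).toReal := by norm_num
  have hcut : ∀ r : ℕ, ‖cutF (P r) φ‖ ^ (2 : ℝ≥0∞).toReal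
      = ∑' v, ‖cutF (P r) φ v‖ ^ (2 : ℝ≥0∞).toReal :=
    fun r => lp.norm_rpow_eq_tsum hp _
  rw [Finset.sum_congr rfl (fun r _ => hcut r)]
  rw [← Summable.tsum_finsetSum (fun r _ => (lp.memℓp (cutF (P r) φ)).summable hp)]
  rw [lp.norm_rpow_eq_tsum hp φ]
  refine Summable.tsum_le_tsum ?_ ?_ ((lp.memℓp φ).summable hp)
  · intro v
    by_cases hv : ∃ r ∈ t, P r v
    · obtain ⟨r₀, hr₀t, hr₀⟩ := hv
      rw [Finset.sum_eq_single_of_mem r₀ hr₀t ?_]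
      · rw [cutF_apply, if_pos hr₀]
      · intro r hrt hne
        rw [cutF_apply, if_neg (fun h => hne (hdisj v r hrt r₀ hr₀t h hr₀)), norm_zero,
          Real.zero_rpow hp.ne']
    · push_neg at hv
      rw [Finset.sum_eq_zero (fun r hrt => by
        rw [cutF_apply, if_neg (hv r hrt), norm_zero, Real.zero_rpow hp.ne'])]
      positivity
  · exact summable_sum (fun r _ => (lp.memℓp (cutF (P r) φ)).summable hp)

set_option maxHeartbeats 2000000 in
set_option synthInstance.maxHeartbeats 200000 in
lemma tail_bound
    (hvanish : ∀ v w : V, len w ≠ len v + 1 → len v ≠ len w + 1 →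
      ⟪lp.single 2 v (1 : ℂ), T (lp.single 2 w (1 : ℂ))⟫_ℂ = 0)
    (hMq : ∀ (φ : lp (fun _ : V => ℂ) 2) (v : V), Mq φ v = (q v : ℂ) * φ v)
    (ε : ℝ) (hε : 0 < ε) (R : ℕ) (hR : 1 ≤ R)
    (hqε : ∀ v w : V, R ≤ len v → (len w = len v + 1 ∨ len v = len w + 1) →
      (len v : ℝ) * |q v - q w| < ε)
    (n : ℕ) (hn : R ≤ n)
    (φ : lp (fun _ : V => ℂ) 2) (hsupp : ∀ v, len v ≤ n → φ v = 0) :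
    ‖(Mq ∘L T - T ∘L Mq) φ‖ ≤ 6 * ε * ‖T‖ * ‖φ‖ := by
  have hTn : (0:ℝ) ≤ ‖T‖ := norm_nonneg _
  set K := Mq ∘L T - T ∘L Mq with hK
  set φm : ℕ → lp (fun _ : V => ℂ) 2 := fun r => cutF (fun w => r = len w + 1) φ with hφm
  set φp : ℕ → lp (fun _ : V => ℂ) 2 := fun r => cutF (fun w => len w = r + 1) φ with hφp
  -- per sphere bound
  have hper : ∀ r : ℕ, ‖cutF (fun v => len v = r) (K φ)‖
      ≤ 3 * ε * ‖T‖ * ‖φm r‖ + 3 * ε * ‖T‖ * ‖φp r‖ := by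
    intro r
    have hdecomp : cutF (fun v => len v = r) (K φ)
        = cutF (fun v => len v = r) (K (φm r)) + cutF (fun v => len v = r) (K (φp r)) := by
      have hρ : cutF (fun v => len v = r) (K (φ - φm r - φp r)) = 0 := by
        apply cut_vanish len T Mq q hvanish hMq
        · intro w hw
          simp only [lp.coeFn_sub, Pi.sub_apply, hφm, hφp, cutF_apply]
          rw [if_neg (by omega), if_pos hw]
          ring
        · intro w hw
          simp only [lp.coeFn_sub, Pi.sub_apply, hφm, hφp, cutF_apply]
          rw [if_pos hw, if_neg (by omega)]
          ring
      have : K φ = K (φm r) + K (φp r) + K (φ - φm r - φp r) := by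
        rw [← map_add, ← map_add]
        congr 1
        abel
      rw [this, cutF_add, cutF_add, hρ, add_zero]
    rw [hdecomp]
    have bm : ‖cutF (fun v => len v = r) (K (φm r))‖ ≤ 3 * ε * ‖T‖ * ‖φm r‖ := by
      by_cases h0 : φm r = 0
      · rw [h0, map_zero, cutF_zero, norm_zero, mul_zero]
      · obtain ⟨w, hw⟩ : ∃ w, φm r w ≠ 0 := by
          by_contra h
          push_neg at h
          exact h0 (by apply lp.ext; funext v; simpa using h v)
        have hw1 : r = len w + 1 := by
          by_contra h
          exact hw (by rw [hφm]; simp only [cutF_apply]; rw [if_neg h])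
        have hw2 : ¬ (len w ≤ n) := by
          intro h
          exact hw (by rw [hφm]; simp only [cutF_apply]; rw [if_pos hw1, hsupp w h])
        apply sphere_bound len T Mq q hMq ε hε R hR hqε r (len w) (Or.inl hw1)
          (by omega) (by omega)
        intro v hv
        rw [hφm]
        simp only [cutF_apply]
        split
        next hv2 => exact absurd (by omega : len v = len w) hv
        next => rfl
    have bp : ‖cutF (fun v => len v = r) (K (φp r))‖ ≤ 3 * ε * ‖T‖ * ‖φp r‖ := by
      by_cases h0 : φp r = 0
      · rw [h0, map_zero, cutF_zero, norm_zero, mul_zero]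
      · obtain ⟨w, hw⟩ : ∃ w, φp r w ≠ 0 := by
          by_contra h
          push_neg at h
          exact h0 (by apply lp.ext; funext v; simpa using h v)
        have hw1 : len w = r + 1 := by
          by_contra h
          exact hw (by rw [hφp]; simp only [cutF_apply]; rw [if_neg h])
        have hw2 : ¬ (len w ≤ n) := by
          intro h
          exact hw (by rw [hφp]; simp only [cutF_apply]; rw [if_pos hw1, hsupp w h])
        apply sphere_bound len T Mq q hMq ε hε R hR hqε r (r + 1) (Or.inr rfl)
          (by omega) (by omega)
        intro v hv
        rw [hφp]
        simp only [cutF_apply]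
        rw [if_neg (fun h => hv h)]
    calc ‖cutF (fun v => len v = r) (K (φm r)) + cutF (fun v => len v = r) (K (φp r))‖
        ≤ ‖cutF (fun v => len v = r) (K (φm r))‖ + ‖cutF (fun v => len v = r) (K (φp r))‖ :=
          norm_add_le _ _
      _ ≤ 3 * ε * ‖T‖ * ‖φm r‖ + 3 * ε * ‖T‖ * ‖φp r‖ := add_le_add bm bp
  -- assemble
  have hp : 0 < (2 : ℝ≥0∞).toReal := by norm_num
  have hrpow : ∀ x : ℝ, 0 ≤ x → x ^ (2 : ℝ≥0∞).toReal = x ^ (2 : ℕ) := by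
    intro x hx
    rw [show (2 : ℝ≥0∞).toReal = ((2 : ℕ) : ℝ) by norm_num, Real.rpow_natCast]
  have hC : (0:ℝ) ≤ 6 * ε * ‖T‖ * ‖φ‖ := by positivity
  refine lp.norm_le_of_forall_sum_le hp hC ?_
  intro sfin
  set t := sfin.image len with ht
  have hsplit : ∑ v ∈ sfin, ‖K φ v‖ ^ (2 : ℝ≥0∞).toReal
      = ∑ r ∈ t, ∑ v ∈ sfin.filter (fun v => len v = r), ‖K φ v‖ ^ (2 : ℝ≥0∞).toReal := by
    rw [Finset.sum_fiberwise_of_maps_to (fun v hv => Finset.mem_image_of_mem len hv)]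
  rw [hsplit]
  have hinner : ∀ r ∈ t, ∑ v ∈ sfin.filter (fun v => len v = r), ‖K φ v‖ ^ (2 : ℝ≥0∞).toReal
      ≤ ‖cutF (fun v => len v = r) (K φ)‖ ^ (2 : ℝ≥0∞).toReal := by
    intro r _
    have : ∀ v ∈ sfin.filter (fun v => len v = r),
        ‖K φ v‖ ^ (2 : ℝ≥0∞).toReal = ‖cutF (fun v => len v = r) (K φ) v‖ ^ (2 : ℝ≥0∞).toReal := by
      intro v hv
      rw [cutF_apply, if_pos (Finset.mem_filter.mp hv).2]
    rw [Finset.sum_congr rfl this]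
    exact lp.sum_rpow_le_norm_rpow hp _ _
  have hmain : ∑ r ∈ t, ‖cutF (fun v => len v = r) (K φ)‖ ^ (2 : ℝ≥0∞).toReal
      ≤ (6 * ε * ‖T‖ * ‖φ‖) ^ (2 : ℝ≥0∞).toReal := by
    have step1 : ∀ r ∈ t, ‖cutF (fun v => len v = r) (K φ)‖ ^ (2 : ℝ≥0∞).toReal
        ≤ 18 * ε^2 * ‖T‖^2 * (‖φm r‖ ^ (2 : ℝ≥0∞).toReal + ‖φp r‖ ^ (2 : ℝ≥0∞).toReal) := by
      intro r _
      rw [hrpow _ (norm_nonneg _), hrpow _ (norm_nonneg _), hrpow _ (norm_nonneg _)]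
      have h1 := hper r
      have h2 : (0:ℝ) ≤ ‖cutF (fun v => len v = r) (K φ)‖ := norm_nonneg _
      have h3 : (0:ℝ) ≤ ‖φm r‖ := norm_nonneg _
      have h4 : (0:ℝ) ≤ ‖φp r‖ := norm_nonneg _
      nlinarith [sq_nonneg (‖φm r‖ - ‖φp r‖), sq_nonneg (3 * ε * ‖T‖), mul_nonneg (mul_nonneg hε.le hTn) (mul_nonneg h3 h4)]
    calc ∑ r ∈ t, ‖cutF (fun v => len v = r) (K φ)‖ ^ (2 : ℝ≥0∞).toReal
        ≤ ∑ r ∈ t, 18 * ε^2 * ‖T‖^2 * (‖φm r‖ ^ (2 : ℝ≥0∞).toReal + ‖φp r‖ ^ (2 : ℝ≥0∞).toReal) :=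
          Finset.sum_le_sum step1
      _ = 18 * ε^2 * ‖T‖^2 * ((∑ r ∈ t, ‖φm r‖ ^ (2 : ℝ≥0∞).toReal)
            + ∑ r ∈ t, ‖φp r‖ ^ (2 : ℝ≥0∞).toReal) := by
          rw [← Finset.mul_sum, Finset.sum_add_distrib]
      _ ≤ 18 * ε^2 * ‖T‖^2 * (‖φ‖ ^ (2 : ℝ≥0∞).toReal + ‖φ‖ ^ (2 : ℝ≥0∞).toReal) := by
          apply mul_le_mul_of_nonneg_left _ (by positivity)
          apply add_le_add
          · exact sum_sq_cutF_le t (fun r w => r = len w + 1) (fun v r _ r' _ h h' => by omega) φ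
          · exact sum_sq_cutF_le t (fun r w => len w = r + 1) (fun v r _ r' _ h h' => by omega) φ
      _ = (6 * ε * ‖T‖ * ‖φ‖) ^ (2 : ℝ≥0∞).toReal := by
          rw [hrpow _ (norm_nonneg _), hrpow _ hC]
          ring
  exact le_trans (Finset.sum_le_sum hinner) hmain

end Main

noncomputable def cutCLM (P : V → Prop) [DecidablePred P] :
    lp (fun _ : V => ℂ) 2 →L[ℂ] lp (fun _ : V => ℂ) 2 :=
  LinearMap.mkContinuous
    { toFun := cutF P
      map_add' := cutF_add P
      map_smul' := fun c g => cutF_smul P c g }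
    1 (fun g => by rw [one_mul]; exact norm_cutF_le P g)

@[simp] lemma cutCLM_apply (P : V → Prop) [DecidablePred P] (g : lp (fun _ : V => ℂ) 2) :
    cutCLM P g = cutF P g := rfl

lemma isCompactOperator_of_finrange (f : lp (fun _ : V => ℂ) 2 →L[ℂ] lp (fun _ : V => ℂ) 2)
    (W : Submodule ℂ (lp (fun _ : V => ℂ) 2)) (hW : FiniteDimensional ℂ W)
    (hr : ∀ x, f x ∈ W) : IsCompactOperator ⇑f := by
  haveI := hW
  haveI : ProperSpace W := FiniteDimensional.proper ℂ W
  refine ⟨Subtype.val '' Metric.closedBall (0 : W) ‖f‖, ?_, ?_⟩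
  · exact (isCompact_closedBall _ _).image continuous_subtype_val
  · refine Filter.mem_of_superset (Metric.closedBall_mem_nhds (0 : lp (fun _ : V => ℂ) 2)
      one_pos) ?_
    intro x hx
    refine ⟨⟨f x, hr x⟩, ?_, rfl⟩
    rw [Metric.mem_closedBall, dist_zero_right]
    have hx1 : ‖x‖ ≤ 1 := by rwa [Metric.mem_closedBall, dist_zero_right] at hx
    have : ‖(⟨f x, hr x⟩ : W)‖ = ‖f x‖ := rfl
    rw [this]
    calc ‖f x‖ ≤ ‖f‖ * ‖x‖ := f.le_opNorm x
      _ ≤ ‖f‖ * 1 := mul_le_mul_of_nonneg_left hx1 (norm_nonneg _)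
      _ = ‖f‖ := mul_one _

lemma coeFn_finset_sum (s : Finset V) (g : V → lp (fun _ : V => ℂ) 2) :
    ((∑ v ∈ s, g v : lp (fun _ : V => ℂ) 2) : V → ℂ) = ∑ v ∈ s, (g v : V → ℂ) := by
  classical
  induction s using Finset.induction with
  | empty => simp; rfl
  | insert _ _ hns ih =>
    rw [Finset.sum_insert hns, Finset.sum_insert hns, lp.coeFn_add, ih]

lemma isCompactOperator_cutCLM [DecidableEq V] (P : V → Prop) [DecidablePred P]
    (hP : {v : V | P v}.Finite) : IsCompactOperator ⇑(cutCLM P) := by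
  classical
  set W : Submodule ℂ (lp (fun _ : V => ℂ) 2) :=
    Submodule.span ℂ ((fun v => (lp.single 2 v (1 : ℂ) : lp (fun _ : V => ℂ) 2)) '' {v | P v})
    with hWdef
  have hfd : FiniteDimensional ℂ W := FiniteDimensional.span_of_finite ℂ (hP.image _)
  apply isCompactOperator_of_finrange _ W hfd
  intro φ
  have hrepr : cutCLM P φ = ∑ v ∈ hP.toFinset, φ v • lp.single 2 v (1 : ℂ) := by
    apply lp.ext
    rw [coeFn_finset_sum]
    funext u
    rw [cutCLM_apply, cutF_apply, Finset.sum_apply]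
    have : ∀ v : V, (φ v • (lp.single 2 v (1 : ℂ) : lp (fun _ : V => ℂ) 2)) u
        = if u = v then φ v else 0 := by
      intro v
      rw [lp.coeFn_smul, Pi.smul_apply, lp.single_apply]
      by_cases h : u = v
      · subst h; simp
      · simp [h, Pi.single_eq_of_ne h]
    rw [Finset.sum_congr rfl (fun v _ => this v), Finset.sum_ite_eq]
    by_cases hPu : P u
    · rw [if_pos hPu, if_pos (hP.mem_toFinset.mpr hPu)]
    · rw [if_neg hPu, if_neg (fun h => hPu (hP.mem_toFinset.mp h))]
  rw [hrepr]
  apply Submodule.sum_mem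
  intro v hv
  exact Submodule.smul_mem _ _ (Submodule.subset_span ⟨v, hP.mem_toFinset.mp hv, rfl⟩)

end Statement19

open scoped InnerProductSpace



set_option maxHeartbeats 1000000

/-- on ℓ²(V) of a rooted, locally finite graph with finite
spheres, let T be a bounded operator whose matrix elements ⟨δ_v, T δ_w⟩ vanish
unless |w| = |v| ± 1 and satisfy the Schur-type row bound
Σ_w |⟨δ_v, T δ_w⟩| ≤ C(|v|+1), and let q : V → ℝ (acting by multiplication)
satisfy sup_{w : |w|=|v|±1} |q(v) − q(w)| = o(|v|^{−1}) as |v| → ∞.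
Then the commutator [q, T] is a compact operator on ℓ²(V). -/
theorem commutator_q_T_compact
    (V : Type*) [Countable V] [DecidableEq V]
    (len : V → ℕ)  -- distance to the root
    (hfin : ∀ r : ℕ, {v : V | len v = r}.Finite)
    (T : lp (fun _ : V => ℂ) 2 →L[ℂ] lp (fun _ : V => ℂ) 2)
    (hvanish : ∀ v w : V, len w ≠ len v + 1 → len v ≠ len w + 1 →
      ⟪lp.single 2 v (1 : ℂ), T (lp.single 2 w (1 : ℂ))⟫_ℂ = 0)
    (C : ℝ)
    (hrow : ∀ v : V,
      ∑' w : V, ‖⟪lp.single 2 v (1 : ℂ), T (lp.single 2 w (1 : ℂ))⟫_ℂ‖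
        ≤ C * ((len v : ℝ) + 1))
    (q : V → ℝ)
    (Mq : lp (fun _ : V => ℂ) 2 →L[ℂ] lp (fun _ : V => ℂ) 2)
    (hMq : ∀ (φ : lp (fun _ : V => ℂ) 2) (v : V), Mq φ v = (q v : ℂ) * φ v)
    (hq : ∀ ε > (0 : ℝ), ∃ R : ℕ, ∀ v w : V, R ≤ len v →
      (len w = len v + 1 ∨ len v = len w + 1) →
      (len v : ℝ) * |q v - q w| < ε) :
    IsCompactOperator ⇑(Mq ∘L T - T ∘L Mq) := by
  classical
  set K := Mq ∘L T - T ∘L Mq with hK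
  set F : ℕ → (lp (fun _ : V => ℂ) 2 →L[ℂ] lp (fun _ : V => ℂ) 2) :=
    fun n => K ∘L Statement19.cutCLM (fun v => len v ≤ n) with hF
  have hcompF : ∀ n, IsCompactOperator ⇑(F n) := by
    intro n
    have hfinn : {v : V | len v ≤ n}.Finite := by
      have : {v : V | len v ≤ n} = ⋃ r ∈ Finset.range (n + 1), {v : V | len v = r} := by
        ext v
        simp [Nat.lt_succ_iff]
      rw [this]
      exact Set.Finite.biUnion (Finset.range (n + 1)).finite_toSet (fun r _ => hfin r)
    have h1 : IsCompactOperator ⇑(Statement19.cutCLM (fun v : V => len v ≤ n)) :=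
      Statement19.isCompactOperator_cutCLM _ hfinn
    have h2 := h1.continuous_comp K.continuous
    rw [hF]
    exact h2
  apply isCompactOperator_of_tendsto (l := Filter.atTop) (F := F) ?_ (Filter.Eventually.of_forall hcompF)
  rw [Metric.tendsto_atTop]
  intro ε' hε'
  set ε : ℝ := ε' / (12 * (‖T‖ + 1)) with hεdef
  have hTn : (0:ℝ) ≤ ‖T‖ := norm_nonneg _
  have hε : 0 < ε := by
    rw [hεdef]
    positivity
  obtain ⟨R, hR⟩ := hq ε hε
  set R₁ := max R 1 with hR₁def
  have hR₁ : 1 ≤ R₁ := le_max_right _ _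
  have hqε : ∀ v w : V, R₁ ≤ len v → (len w = len v + 1 ∨ len v = len w + 1) →
      (len v : ℝ) * |q v - q w| < ε := by
    intro v w h1 h2
    exact hR v w (le_trans (le_max_left _ _) h1) h2
  refine ⟨R₁, ?_⟩
  intro n hn
  have hbound : ∀ φ : lp (fun _ : V => ℂ) 2, ‖(F n - K) φ‖ ≤ 6 * ε * ‖T‖ * ‖φ‖ := by
    intro φ
    set ψ := Statement19.cutF (fun v : V => len v ≤ n) φ - φ with hψ
    have he : (F n - K) φ = K ψ := by
      rw [hψ, map_sub, hF]
      simp only [ContinuousLinearMap.sub_apply, ContinuousLinearMap.comp_apply,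
        Statement19.cutCLM_apply]
    have hψsupp : ∀ v, len v ≤ n → ψ v = 0 := by
      intro v hv
      rw [hψ, lp.coeFn_sub, Pi.sub_apply, Statement19.cutF_apply, if_pos hv, sub_self]
    have hψnorm : ‖ψ‖ ≤ ‖φ‖ := by
      apply Statement19.norm_le_of_pointwise
      intro v
      rw [hψ, lp.coeFn_sub, Pi.sub_apply, Statement19.cutF_apply]
      by_cases hv : len v ≤ n
      · rw [if_pos hv, sub_self, norm_zero]
        exact norm_nonneg _
      · rw [if_neg hv, zero_sub, norm_neg]
    rw [he, hK]
    calc ‖(Mq ∘L T - T ∘L Mq) ψ‖ ≤ 6 * ε * ‖T‖ * ‖ψ‖ :=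
          Statement19.tail_bound len T Mq q hvanish hMq ε hε R₁ hR₁ hqε n hn ψ hψsupp
      _ ≤ 6 * ε * ‖T‖ * ‖φ‖ := by
          apply mul_le_mul_of_nonneg_left hψnorm (by positivity)
  have hop : ‖F n - K‖ ≤ 6 * ε * ‖T‖ :=
    ContinuousLinearMap.opNorm_le_bound _ (by positivity) hbound
  rw [dist_eq_norm]
  have hlt : 6 * ε * ‖T‖ < ε' := by
    have hD : (0:ℝ) < 12 * (‖T‖ + 1) := by positivity
    rw [hεdef,
      show 6 * (ε' / (12 * (‖T‖ + 1))) * ‖T‖ = ε' * (6 * ‖T‖) / (12 * (‖T‖ + 1)) by ring,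
      div_lt_iff₀ hD]
    nlinarith
  exact lt_of_le_of_lt hop hlt
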